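/- Under Assumptions (A5) and (A6), for every ε ∈ (0,1) there exists a sequence φ(n) → 0 and N ∈ ℕ such that for all n ≥ N, with probability at least 1 − ε, the degree centralities of the normalized weighted adjacency matrix Ā(n) := A_w(n)/Δ_w(n) satisfy (1/n)·‖Ā(n)𝟙 − E[Ā(n)]𝟙‖₁ ≤ φ(n), where 𝟙 is the all-ones vector and ‖·‖₁ the ℓ¹ norm on ℝⁿ. -/

import Mathlib

open MeasureTheory ProbabilityTheory Matrix Filter

/-- The spectral norm of a real square matrix. -/
noncomputable def specNorm {n : ℕ} (A : Matrix (Fin n) (Fin n) ℝ) : ℝ :=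
  ‖Matrix.toEuclideanCLM (𝕜 := ℝ) A‖

/-- The `‖·‖_∞` norm of a matrix: maximum absolute row sum. -/
noncomputable def rowSumNorm {n : ℕ} (A : Matrix (Fin n) (Fin n) ℝ) : ℝ :=
  ⨆ i, ∑ j, |A i j|

/-- The adjacency matrix of the complete graph on the vertices of the ordered list `k.2`. -/
def completeSub {T : Type} {m : T → ℕ} (n : ℕ)
    (k : Σ t : T, Fin (m t) ↪ Fin n) : Matrix (Fin n) (Fin n) ℝ :=
  fun i j => if i ≠ j ∧ (∃ a, k.2 a = i) ∧ (∃ b, k.2 b = j) then 1 else 0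

section BernAux
variable {Ω' : Type} [MeasurableSpace Ω'] {μ' : Measure Ω'} [IsProbabilityMeasure μ']

lemma bern_integral {f : Ω' → ℝ} (hmeas : Measurable f)
    (h01 : ∀ ω, f ω = 0 ∨ f ω = 1) {q : ℝ} (hq0 : 0 ≤ q)
    (hμ : μ' {ω | f ω = 1} = ENNReal.ofReal q) :
    ∫ ω, f ω ∂μ' = q := by
  have hset : MeasurableSet {ω | f ω = 1} := hmeas (measurableSet_singleton 1)
  have hind : f = Set.indicator {ω | f ω = 1} (fun _ => (1 : ℝ)) := by
    funext ω
    rcases h01 ω with hω | hω <;>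
      simp [Set.indicator_apply, Set.mem_setOf_eq, hω]
  calc ∫ ω, f ω ∂μ' = ∫ ω, Set.indicator {ω | f ω = 1} (fun _ => (1:ℝ)) ω ∂μ' := by
        rw [← hind]
    _ = (μ' {ω | f ω = 1}).toReal • (1:ℝ) := integral_indicator_const (1:ℝ) hset
    _ = q := by rw [hμ, smul_eq_mul, mul_one, ENNReal.toReal_ofReal hq0]

lemma bern_memℒp {f : Ω' → ℝ} (hmeas : Measurable f)
    (h01 : ∀ ω, f ω = 0 ∨ f ω = 1) (pp : ENNReal) :
    MemLp f pp μ' :=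
  MemLp.of_bound hmeas.aestronglyMeasurable 1 (Filter.Eventually.of_forall fun ω => by
    rcases h01 ω with hω | hω <;> simp [hω])

lemma bern_variance_le {f : Ω' → ℝ} (hmeas : Measurable f)
    (h01 : ∀ ω, f ω = 0 ∨ f ω = 1) {q : ℝ} (hq0 : 0 ≤ q)
    (hμ : μ' {ω | f ω = 1} = ENNReal.ofReal q) :
    variance f μ' ≤ q := by
  have h2 : MemLp f 2 μ' := bern_memℒp hmeas h01 2
  have hint : ∫ ω, f ω ∂μ' = q := bern_integral hmeas h01 hq0 hμ
  have hsq : (fun ω => (f ^ 2) ω) = f := by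
    funext ω; rcases h01 ω with hω | hω <;> simp [hω]
  rw [variance_eq_sub h2, hsq, hint]
  nlinarith
end BernAux

section CardAux

lemma card_emb_lb (n mm : ℕ) (hm : 1 ≤ mm) (i0 : Fin n) :
    ((n - 1).descFactorial (mm - 1) : ℕ) ≤
      Nat.card {L : Fin mm ↪ Fin n // (∃ a, L a = i0) ∧ (∃ b, L b = i0)} := by
  classical
  set P : (Fin mm ↪ Fin n) → Prop := fun L => (∃ a, L a = i0) ∧ (∃ b, L b = i0) with hP
  have hmm : mm - 1 + 1 = mm := by omega
  let eqv : Fin mm ≃ Option (Fin (mm - 1)) :=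
    (finCongr hmm.symm).trans (finSuccEquiv (mm - 1))
  let F : (Fin (mm - 1) ↪ {x : Fin n // x ≠ i0}) → {L : Fin mm ↪ Fin n // P L} := by
    intro e
    have hnr : i0 ∉ Set.range ⇑(e.trans (Function.Embedding.subtype _)) := by
      rintro ⟨a, ha⟩
      exact (e a).2 ha
    refine ⟨eqv.toEmbedding.trans
      ((e.trans (Function.Embedding.subtype _)).optionElim i0 hnr), ?_, ?_⟩ <;>
    · refine ⟨eqv.symm none, ?_⟩
      simp [Function.Embedding.optionElim, Function.Embedding.trans_apply]
  have hFinj : Function.Injective F := by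
    intro e1 e2 hFe
    have hval : ∀ a : Fin mm, (F e1).1 a = (F e2).1 a := by
      intro a; rw [hFe]
    ext b
    have := hval (eqv.symm (some b))
    simp [F, Function.Embedding.trans_apply, Function.Embedding.optionElim] at this
    exact congrArg Fin.val this
  calc ((n - 1).descFactorial (mm - 1) : ℕ)
      = Nat.card (Fin (mm - 1) ↪ {x : Fin n // x ≠ i0}) := by
        rw [Nat.card_eq_fintype_card, Fintype.card_embedding_eq]
        congr 1
        · have : Fintype.card {x : Fin n // ¬ x = i0} =
              Fintype.card (Fin n) - Fintype.card {x : Fin n // x = i0} :=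
            Fintype.card_subtype_compl _
          simpa [Fintype.card_subtype_eq] using this.symm
        · simp
    _ ≤ Nat.card {L : Fin mm ↪ Fin n // P L} := Nat.card_le_card_of_injective F hFinj

end CardAux

set_option maxHeartbeats 1000000 in
/-- Corollary 3, degree centrality. Under (A5) and (A6), for every
`ε ∈ (0,1)` there is a vanishing sequence `φ(n)` such that for `n` large, with probability
at least `1 − ε`, `(1/n)·‖c^d(Ā(n)) − c^d(E[Ā(n)])‖₁ ≤ φ(n)`. -/
theorem degree_centrality_convergence
    {T : Type} [Fintype T] [DecidableEq T] [Nonempty T]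
    (m : T → ℕ) (hm2 : ∀ t, 2 ≤ m t)
    -- the generating probabilities p_n(t,L)
    (p : (n : ℕ) → (Σ t : T, Fin (m t) ↪ Fin n) → ℝ)
    (hp : ∀ n k, p n k ∈ Set.Icc (0 : ℝ) 1)
    -- the probability spaces and the independent Bernoulli families x(t,L)
    {Ω : ℕ → Type} [∀ n, MeasurableSpace (Ω n)]
    (μ : (n : ℕ) → Measure (Ω n)) [∀ n, IsProbabilityMeasure (μ n)]
    (x : (n : ℕ) → (Σ t : T, Fin (m t) ↪ Fin n) → Ω n → ℝ)
    (hxmeas : ∀ n k, Measurable (x n k))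
    (hx01 : ∀ n k ω, x n k ω = 0 ∨ x n k ω = 1)
    (hxp : ∀ n k, μ n {ω | x n k ω = 1} = ENNReal.ofReal (p n k))
    (hindep : ∀ n, iIndepFun (x n) (μ n))
    -- the weighted adjacency matrix, its expectation, and Δ_w
    (Aw : (n : ℕ) → Ω n → Matrix (Fin n) (Fin n) ℝ)
    (hAw : ∀ n ω, Aw n ω = ∑ k, x n k ω • completeSub n k)
    (EAw : (n : ℕ) → Matrix (Fin n) (Fin n) ℝ)
    (hEAw : ∀ n i j, EAw n i j = ∫ ω, Aw n ω i j ∂(μ n))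
    (Δw : ℕ → ℝ) (hΔw : ∀ n, Δw n = rowSumNorm (EAw n))
    -- Assumption (A5)
    (h l u : T → ℝ)
    (hl : ∀ t, 0 < l t) (hlu : ∀ t, l t < u t)
    (hh1 : ∀ t, (m t : ℝ) - 2 < h t) (hh2 : ∀ t, h t < (m t : ℝ) - 1)
    (hA5 : ∀ n k, p n k = 0 ∨
      ∃ b ∈ Set.Icc (l k.1) (u k.1), p n k = b / (n : ℝ) ^ (h k.1))
    -- Assumption (A6)
    (ξ : T → ℝ) (hξ : ∀ t, ξ t ∈ Set.Ioo (0 : ℝ) 1)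
    (hA6a : ∀ (n : ℕ) (t : T),
      ξ t * (Nat.card (Fin (m t) ↪ Fin n) : ℝ) ≤
        (Nat.card {L : Fin (m t) ↪ Fin n // 0 < p n ⟨t, L⟩} : ℝ))
    (hA6b : ∀ (n : ℕ) (t : T) (i j : Fin n),
      ξ t * (Nat.card {L : Fin (m t) ↪ Fin n // (∃ a, L a = i) ∧ (∃ b, L b = j)} : ℝ) ≤
        (Nat.card {L : Fin (m t) ↪ Fin n //
          ((∃ a, L a = i) ∧ (∃ b, L b = j)) ∧ 0 < p n ⟨t, L⟩} : ℝ))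
    : ∀ ε : ℝ, ε ∈ Set.Ioo (0 : ℝ) 1 →
      ∃ φ : ℕ → ℝ, Tendsto φ atTop (nhds 0) ∧
        ∃ N : ℕ, ∀ n : ℕ, N ≤ n →
          ENNReal.ofReal (1 - ε) ≤
            μ n {ω | (1 / (n : ℝ)) *
              ∑ i, |(((Δw n)⁻¹ • Aw n ω) *ᵥ (fun _ => 1)) i -
                    (((Δw n)⁻¹ • EAw n) *ᵥ (fun _ => 1)) i| ≤ φ n} := by
  classical
  intro ε hε
  obtain ⟨hε0, hε1⟩ := hε
  have t0 : T := Classical.arbitrary T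
  set Mr : ℝ := ∑ t, (m t : ℝ) with hMrdef
  have hmM : ∀ t : T, (m t : ℝ) ≤ Mr := fun t =>
    Finset.single_le_sum (f := fun t => (m t : ℝ)) (fun t _ => by positivity)
      (Finset.mem_univ t)
  have hMr2 : (2 : ℝ) ≤ Mr := le_trans (by exact_mod_cast hm2 t0) (hmM t0)
  have hMrpos : (0 : ℝ) < Mr := by linarith
  set δ : ℝ := ((m t0 : ℝ) - 1) - h t0 with hδdef
  have hδpos : 0 < δ := by have := hh2 t0; rw [hδdef]; linarith
  obtain ⟨hξ0, hξ1⟩ := hξ t0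
  set c : ℝ := ξ t0 * l t0 / 2 ^ (m t0 - 1) with hcdef
  have hcpos : 0 < c := div_pos (mul_pos hξ0 (hl t0)) (by positivity)
  refine ⟨fun n => Real.sqrt (Mr / (ε * (c * (n : ℝ) ^ δ))), ?_, ?_⟩
  · -- the sequence tends to 0
    have h1 : Tendsto (fun nn : ℕ => (nn : ℝ) ^ δ) atTop atTop :=
      (tendsto_rpow_atTop hδpos).comp tendsto_natCast_atTop_atTop
    have h2 : Tendsto (fun nn : ℕ => ε * (c * (nn : ℝ) ^ δ)) atTop atTop :=
      (h1.const_mul_atTop hcpos).const_mul_atTop hε0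
    have h3 : Tendsto (fun nn : ℕ => Mr / (ε * (c * (nn : ℝ) ^ δ))) atTop (nhds 0) :=
      Tendsto.div_atTop tendsto_const_nhds h2
    have h4 := (Real.continuous_sqrt.tendsto' 0 0 Real.sqrt_zero).comp h3
    exact h4
  refine ⟨2 * (∑ t, m t), fun n hn => ?_⟩
  -- basic facts about n
  have hMnat : ∀ t : T, m t ≤ ∑ t, m t := fun t =>
    Finset.single_le_sum (f := m) (fun t _ => Nat.zero_le _) (Finset.mem_univ t)
  have hmn : 2 * m t0 ≤ n := le_trans (Nat.mul_le_mul_left 2 (hMnat t0)) hn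
  have hnpos : 0 < n := by have := hm2 t0; omega
  have hnR : (0 : ℝ) < n := by exact_mod_cast hnpos
  -- notation
  set r : (Σ t : T, Fin (m t) ↪ Fin n) → Fin n → ℝ :=
    fun k i => ∑ j, completeSub n k i j with hrdef
  -- facts about completeSub
  have hcs01 : ∀ (k : Σ t : T, Fin (m t) ↪ Fin n) (i j : Fin n),
      completeSub n k i j = 0 ∨ completeSub n k i j = 1 := by
    intro k i j; unfold completeSub; split <;> simp
  have hcsnn : ∀ (k : Σ t : T, Fin (m t) ↪ Fin n) (i j : Fin n), 0 ≤ completeSub n k i j := by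
    intro k i j; rcases hcs01 k i j with h' | h' <;> rw [h'] <;> norm_num
  have hrnn : ∀ k i, 0 ≤ r k i := fun k i =>
    Finset.sum_nonneg fun j _ => hcsnn k i j
  have hrM : ∀ k i, r k i ≤ Mr := by
    intro k i
    have hstep : ∀ j, completeSub n k i j ≤ if ∃ b, k.2 b = j then (1:ℝ) else 0 := by
      intro j
      unfold completeSub
      split_ifs with h1 h2
      · exact le_refl 1
      · exact absurd h1.2.2 h2
      · norm_num
      · exact le_refl 0
    calc r k i ≤ ∑ j, if ∃ b, k.2 b = j then (1:ℝ) else 0 :=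
          Finset.sum_le_sum fun j _ => hstep j
      _ = ((Finset.univ.filter fun j => ∃ b, k.2 b = j).card : ℝ) := by
          rw [Finset.sum_boole]
      _ = ((Finset.univ.image k.2).card : ℝ) := by
          congr 2
          ext j
          simp [Finset.mem_image, eq_comm]
      _ = (m k.1 : ℝ) := by
          rw [Finset.card_image_of_injective _ k.2.injective]
          simp
      _ ≤ Mr := hmM k.1
  -- integral facts for the Bernoulli variables
  have hxint : ∀ k, ∫ ω, x n k ω ∂(μ n) = p n k := fun k =>
    bern_integral (hxmeas n k) (hx01 n k) (hp n k).1 (hxp n k)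
  have hxmem : ∀ k (pp : ENNReal), MemLp (x n k) pp (μ n) := fun k pp =>
    bern_memℒp (hxmeas n k) (hx01 n k) pp
  have hxInt : ∀ k, Integrable (x n k) (μ n) := fun k =>
    memLp_one_iff_integrable.mp (hxmem k 1)
  have hxvar : ∀ k, variance (x n k) (μ n) ≤ p n k := fun k =>
    bern_variance_le (hxmeas n k) (hx01 n k) (hp n k).1 (hxp n k)
  -- the matrix entries
  have hAwent : ∀ ω (i j : Fin n), Aw n ω i j = ∑ k, x n k ω * completeSub n k i j := by
    intro ω i j
    rw [hAw n ω]
    simp [Finset.sum_apply, Matrix.sum_apply, Matrix.smul_apply, smul_eq_mul]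
  have hEA : ∀ i j, EAw n i j = ∑ k, p n k * completeSub n k i j := by
    intro i j
    rw [hEAw n i j]
    calc ∫ ω, Aw n ω i j ∂(μ n)
        = ∫ ω, ∑ k, x n k ω * completeSub n k i j ∂(μ n) := by
          simp only [hAwent]
      _ = ∑ k, ∫ ω, x n k ω * completeSub n k i j ∂(μ n) :=
          integral_finset_sum _ (fun k _ => (hxInt k).mul_const _)
      _ = ∑ k, p n k * completeSub n k i j := by
          refine Finset.sum_congr rfl fun k _ => ?_
          rw [integral_mul_const, hxint k]
  have hEAnn : ∀ i j, 0 ≤ EAw n i j := by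
    intro i j
    rw [hEA i j]
    exact Finset.sum_nonneg fun k _ => mul_nonneg (hp n k).1 (hcsnn k i j)
  -- row sums of EAw
  have hED : ∀ i, ∑ j, EAw n i j = ∑ k, p n k * r k i := by
    intro i
    simp only [hEA]
    rw [Finset.sum_comm]
    exact Finset.sum_congr rfl fun k _ => by rw [hrdef]; rw [Finset.mul_sum]
  -- upper bound: row sums are at most Δw n
  have hΔeq : Δw n = ⨆ i, ∑ j, |EAw n i j| := by rw [hΔw n]; rfl
  have hEDle : ∀ i, ∑ k, p n k * r k i ≤ Δw n := by
    intro i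
    rw [← hED i]
    have habs : ∑ j, EAw n i j = ∑ j, |EAw n i j| :=
      Finset.sum_congr rfl fun j _ => (abs_of_nonneg (hEAnn i j)).symm
    rw [habs, hΔeq]
    exact le_ciSup (f := fun i => ∑ j, |EAw n i j|) (Set.Finite.bddAbove (Set.finite_range _)) i
  -- lower bound on Δw n
  have hm2' := hm2 t0
  set i0 : Fin n := ⟨0, hnpos⟩ with hi0def
  have hnh : (0:ℝ) < (n : ℝ) ^ (h t0) := Real.rpow_pos_of_pos hnR _
  have hr1 : ∀ L : Fin (m t0) ↪ Fin n, (∃ a, L a = i0) → 1 ≤ r ⟨t0, L⟩ i0 := by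
    rintro L ⟨a, ha⟩
    haveI hnt : Nontrivial (Fin (m t0)) :=
      ⟨⟨⟨0, by omega⟩, ⟨1, by omega⟩, by simp [Fin.ext_iff]⟩⟩
    obtain ⟨a', ha'⟩ := exists_ne a
    have hcs : completeSub n ⟨t0, L⟩ i0 (L a') = 1 := by
      unfold completeSub
      rw [if_pos]
      refine ⟨?_, ⟨a, ha⟩, ⟨a', rfl⟩⟩
      rw [← ha]
      exact fun hEq => ha' (L.injective hEq.symm)
    calc (1:ℝ) = completeSub n ⟨t0, L⟩ i0 (L a') := hcs.symm
      _ ≤ r ⟨t0, L⟩ i0 := by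
        rw [hrdef]
        exact Finset.single_le_sum (fun j _ => hcsnn _ i0 j) (Finset.mem_univ (L a'))
  have hplb : ∀ L : Fin (m t0) ↪ Fin n, 0 < p n ⟨t0, L⟩ →
      l t0 / (n : ℝ) ^ (h t0) ≤ p n ⟨t0, L⟩ := by
    intro L hpL
    rcases hA5 n ⟨t0, L⟩ with h0 | ⟨b, hbmem, hbeq⟩
    · exact absurd h0 (ne_of_gt hpL)
    · rw [hbeq]
      gcongr
      exact hbmem.1
  set S : Finset (Fin (m t0) ↪ Fin n) :=
    Finset.univ.filter (fun L => ((∃ a, L a = i0) ∧ (∃ b, L b = i0)) ∧ 0 < p n ⟨t0, L⟩)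
    with hSdef
  have hScard : ξ t0 * (((n - 1).descFactorial (m t0 - 1) : ℕ) : ℝ) ≤ (S.card : ℝ) := by
    have h6 := hA6b n t0 i0 i0
    have hcards : (Nat.card {L : Fin (m t0) ↪ Fin n //
        ((∃ a, L a = i0) ∧ (∃ b, L b = i0)) ∧ 0 < p n ⟨t0, L⟩} : ℝ) = (S.card : ℝ) := by
      rw [hSdef]
      norm_cast
      rw [Nat.card_eq_fintype_card, Fintype.card_subtype]
    have hbig := card_emb_lb n (m t0) (by omega) i0
    have hmul : ξ t0 * (((n - 1).descFactorial (m t0 - 1) : ℕ) : ℝ) ≤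
        ξ t0 * (Nat.card {L : Fin (m t0) ↪ Fin n //
          (∃ a, L a = i0) ∧ (∃ b, L b = i0)} : ℝ) :=
      mul_le_mul_of_nonneg_left (Nat.cast_le.mpr hbig) hξ0.le
    exact le_trans hmul (le_trans h6 (le_of_eq hcards))
  have hΔlb : c * (n : ℝ) ^ δ ≤ Δw n := by
    have step4 : ∑ L ∈ S, p n ⟨t0, L⟩ * r ⟨t0, L⟩ i0 ≤ Δw n := by
      refine le_trans ?_ (hEDle i0)
      calc ∑ L ∈ S, p n ⟨t0, L⟩ * r ⟨t0, L⟩ i0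
          ≤ ∑ L : Fin (m t0) ↪ Fin n, p n ⟨t0, L⟩ * r ⟨t0, L⟩ i0 :=
            Finset.sum_le_sum_of_subset_of_nonneg (Finset.subset_univ S)
              (fun L _ _ => mul_nonneg (hp n ⟨t0, L⟩).1 (hrnn _ _))
        _ ≤ ∑ t : T, ∑ L : Fin (m t) ↪ Fin n, p n ⟨t, L⟩ * r ⟨t, L⟩ i0 :=
            Finset.single_le_sum
              (f := fun t => ∑ L : Fin (m t) ↪ Fin n, p n ⟨t, L⟩ * r ⟨t, L⟩ i0)
              (fun t _ => Finset.sum_nonneg fun L _ => mul_nonneg (hp n ⟨t, L⟩).1 (hrnn _ _))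
              (Finset.mem_univ t0)
        _ = ∑ k, p n k * r k i0 := by
            rw [← Finset.univ_sigma_univ, Finset.sum_sigma]
    have step5 : (S.card : ℝ) * (l t0 / (n : ℝ) ^ (h t0)) ≤
        ∑ L ∈ S, p n ⟨t0, L⟩ * r ⟨t0, L⟩ i0 := by
      have hterm : ∀ L ∈ S, l t0 / (n : ℝ) ^ (h t0) ≤ p n ⟨t0, L⟩ * r ⟨t0, L⟩ i0 := by
        intro L hL
        rw [hSdef] at hL
        simp only [Finset.mem_filter, Finset.mem_univ, true_and] at hL
        obtain ⟨⟨hA, _⟩, hppos⟩ := hL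
        calc l t0 / (n : ℝ) ^ (h t0) = (l t0 / (n : ℝ) ^ (h t0)) * 1 := (mul_one _).symm
          _ ≤ p n ⟨t0, L⟩ * r ⟨t0, L⟩ i0 :=
            mul_le_mul (hplb L hppos) (hr1 L hA) zero_le_one (hp n ⟨t0, L⟩).1
      have := Finset.card_nsmul_le_sum S _ _ hterm
      simpa [nsmul_eq_mul] using this
    have hdesc : ((n : ℝ) / 2) ^ (m t0 - 1) ≤ (((n - 1).descFactorial (m t0 - 1) : ℕ) : ℝ) := by
      have h1 : (n - (m t0 - 1)) ^ (m t0 - 1) ≤ (n - 1).descFactorial (m t0 - 1) := by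
        have h2 := Nat.pow_sub_le_descFactorial (n - 1) (m t0 - 1)
        have heq : n - 1 + 1 - (m t0 - 1) = n - (m t0 - 1) := by omega
        rwa [heq] at h2
      have h3 : ((n : ℝ) / 2) ^ (m t0 - 1) ≤ ((n - (m t0 - 1) : ℕ) : ℝ) ^ (m t0 - 1) := by
        apply pow_le_pow_left₀ (by positivity)
        have hc0 : ((n - (m t0 - 1) : ℕ) : ℝ) = (n : ℝ) - ((m t0 - 1 : ℕ) : ℝ) :=
          Nat.cast_sub (by omega)
        have hc1 : ((m t0 - 1 : ℕ) : ℝ) ≤ (m t0 : ℝ) := Nat.cast_le.mpr (Nat.sub_le _ _)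
        have hc2 : (m t0 : ℝ) * 2 ≤ (n : ℝ) := by exact_mod_cast by omega
        rw [hc0]
        linarith
      exact le_trans h3 (by exact_mod_cast h1)
    have hrw : c * (n : ℝ) ^ δ =
        ξ t0 * ((n : ℝ) / 2) ^ (m t0 - 1) * (l t0 / (n : ℝ) ^ (h t0)) := by
      have hcast : (m t0 : ℝ) - 1 = ((m t0 - 1 : ℕ) : ℝ) := by
        rw [Nat.cast_sub (by omega)]
        norm_num
      have hδeq : (n : ℝ) ^ δ = (n : ℝ) ^ (m t0 - 1) / (n : ℝ) ^ (h t0) := by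
        rw [hδdef, hcast, ← Real.rpow_natCast (n : ℝ) (m t0 - 1), ← Real.rpow_sub hnR]
      rw [hcdef, hδeq, div_pow]
      field_simp
    calc c * (n : ℝ) ^ δ
        = ξ t0 * ((n : ℝ) / 2) ^ (m t0 - 1) * (l t0 / (n : ℝ) ^ (h t0)) := hrw
      _ ≤ ξ t0 * (((n - 1).descFactorial (m t0 - 1) : ℕ) : ℝ) * (l t0 / (n : ℝ) ^ (h t0)) :=
          mul_le_mul_of_nonneg_right (mul_le_mul_of_nonneg_left hdesc hξ0.le)
            (div_nonneg (hl t0).le hnh.le)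
      _ ≤ (S.card : ℝ) * (l t0 / (n : ℝ) ^ (h t0)) :=
          mul_le_mul_of_nonneg_right hScard (div_nonneg (hl t0).le hnh.le)
      _ ≤ ∑ L ∈ S, p n ⟨t0, L⟩ * r ⟨t0, L⟩ i0 := step5
      _ ≤ Δw n := step4
  have hΔpos : 0 < Δw n := lt_of_lt_of_le (by positivity) hΔlb
  -- centered row sums and their variance
  set W : Fin n → Ω n → ℝ := fun i ω => ∑ k, (x n k ω - p n k) * r k i with hWdef
  set Y : Fin n → (Σ t : T, Fin (m t) ↪ Fin n) → Ω n → ℝ :=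
    fun i k ω => r k i * x n k ω with hYdef
  have hYmem : ∀ i k, MemLp (Y i k) 2 (μ n) := fun i k => (hxmem k 2).const_mul _
  have hYint : ∀ i k, ∫ ω, Y i k ω ∂(μ n) = r k i * p n k := by
    intro i k
    simp only [hYdef]
    rw [integral_const_mul, hxint k]
  have hvarsum : ∀ i, variance (∑ k, Y i k) (μ n) ≤ Mr * Δw n := by
    intro i
    have hpair : Set.Pairwise ↑(Finset.univ : Finset (Σ t : T, Fin (m t) ↪ Fin n))
        (fun k k' => IndepFun (Y i k) (Y i k') (μ n)) := by
      intro k _ k' _ hkk'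
      exact ((hindep n).indepFun hkk').comp
        (measurable_const_mul (r k i)) (measurable_const_mul (r k' i))
    rw [IndepFun.variance_sum (fun k _ => hYmem i k) hpair]
    have hterm : ∀ k, variance (Y i k) (μ n) ≤ Mr * (p n k * r k i) := by
      intro k
      have hYs : Y i k = r k i • x n k := by
        funext ω; simp [hYdef, smul_eq_mul]
      rw [hYs, variance_smul]
      have hv := hxvar k
      have hvnn := variance_nonneg (x n k) (μ n)
      have hr := hrM k i
      have hrn := hrnn k i
      have hpn := (hp n k).1
      calc r k i ^ 2 * variance (x n k) (μ n)
          ≤ r k i ^ 2 * p n k :=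
            mul_le_mul_of_nonneg_left hv (sq_nonneg _)
        _ = (r k i * r k i) * p n k := by ring
        _ ≤ (Mr * r k i) * p n k :=
            mul_le_mul_of_nonneg_right (mul_le_mul_of_nonneg_right hr hrn) hpn
        _ = Mr * (p n k * r k i) := by ring
    calc ∑ k, variance (Y i k) (μ n)
        ≤ ∑ k, Mr * (p n k * r k i) := Finset.sum_le_sum fun k _ => hterm k
      _ = Mr * ∑ k, p n k * r k i := by rw [Finset.mul_sum]
      _ ≤ Mr * Δw n := mul_le_mul_of_nonneg_left (hEDle i) hMrpos.le
  have hW2 : ∀ i, ∫ ω, (W i ω) ^ 2 ∂(μ n) ≤ Mr * Δw n := by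
    intro i
    have hmemS : MemLp (∑ k, Y i k) 2 (μ n) := memLp_finset_sum' _ (fun k _ => hYmem i k)
    have hintS : ∫ ω, (∑ k, Y i k) ω ∂(μ n) = ∑ k, r k i * p n k := by
      simp only [Finset.sum_apply]
      rw [integral_finset_sum _ (fun k _ => (hYmem i k).integrable one_le_two)]
      exact Finset.sum_congr rfl fun k _ => hYint i k
    have hWeq : ∀ ω, W i ω = (∑ k, Y i k) ω - ∫ ω', (∑ k, Y i k) ω' ∂(μ n) := by
      intro ω
      rw [hintS]
      simp only [hWdef, hYdef, Finset.sum_apply]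
      rw [← Finset.sum_sub_distrib]
      exact Finset.sum_congr rfl fun k _ => by ring
    calc ∫ ω, (W i ω) ^ 2 ∂(μ n)
        = variance (∑ k, Y i k) (μ n) := by
          rw [variance_eq_integral hmemS.aemeasurable]
          apply integral_congr_ae
          filter_upwards with ω
          simp [hWeq ω]
      _ ≤ Mr * Δw n := hvarsum i
  have hWmeas : ∀ i, Measurable (W i) := by
    intro i
    simp only [hWdef]
    exact Finset.measurable_sum _ fun k _ =>
      ((hxmeas n k).sub measurable_const).mul_const _
  have hWbd : ∀ i ω, |W i ω| ≤ (Fintype.card (Σ t : T, Fin (m t) ↪ Fin n) : ℝ) * Mr := by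
    intro i ω
    calc |W i ω| ≤ ∑ k, |(x n k ω - p n k) * r k i| := Finset.abs_sum_le_sum_abs _ _
      _ ≤ ∑ _k : (Σ t : T, Fin (m t) ↪ Fin n), (1 : ℝ) * Mr := by
          refine Finset.sum_le_sum fun k _ => ?_
          rw [abs_mul]
          have hp0 := (hp n k).1
          have hp1 := (hp n k).2
          have h1 : |x n k ω - p n k| ≤ 1 := by
            rcases hx01 n k ω with hh | hh <;> rw [hh, abs_le] <;> constructor <;> linarith
          have h2 : |r k i| ≤ Mr := by
            rw [abs_of_nonneg (hrnn k i)]; exact hrM k i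
          exact mul_le_mul h1 h2 (abs_nonneg _) zero_le_one
      _ = (Fintype.card (Σ t : T, Fin (m t) ↪ Fin n) : ℝ) * Mr := by
          simp [Finset.sum_const, nsmul_eq_mul]
  have hWsqInt : ∀ i, Integrable (fun ω => (W i ω) ^ 2) (μ n) := by
    intro i
    have hmem : MemLp (W i) 2 (μ n) :=
      MemLp.of_bound (hWmeas i).aestronglyMeasurable _
        (Filter.Eventually.of_forall fun ω => by
          rw [Real.norm_eq_abs]; exact hWbd i ω)
    exact hmem.integrable_sq
  set V : Ω n → ℝ := fun ω => ∑ i, (W i ω) ^ 2 with hVdef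
  have hVint : Integrable V (μ n) := by
    simp only [hVdef]
    exact integrable_finset_sum _ fun i _ => hWsqInt i
  have hEV : ∫ ω, V ω ∂(μ n) ≤ (n : ℝ) * (Mr * Δw n) := by
    calc ∫ ω, V ω ∂(μ n) = ∑ i, ∫ ω, (W i ω) ^ 2 ∂(μ n) := by
          simp only [hVdef]
          exact integral_finset_sum _ fun i _ => hWsqInt i
      _ ≤ ∑ _i : Fin n, Mr * Δw n := Finset.sum_le_sum fun i _ => hW2 i
      _ = (n : ℝ) * (Mr * Δw n) := by simp [Finset.sum_const, nsmul_eq_mul]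
  -- Markov's inequality
  set K0 : ℝ := (n : ℝ) * (Mr * Δw n) / ε with hK0def
  have hK0pos : 0 < K0 := by
    rw [hK0def]; exact div_pos (mul_pos hnR (mul_pos hMrpos hΔpos)) hε0
  have hVnn : (0 : Ω n → ℝ) ≤ᵐ[μ n] V :=
    Filter.Eventually.of_forall fun ω => Finset.sum_nonneg fun i _ => sq_nonneg _
  have hmark := mul_meas_ge_le_integral_of_nonneg hVnn hVint K0
  have htoReal : ((μ n) {ω | K0 ≤ V ω}).toReal ≤ ε := by
    have h1 : K0 * ((μ n) {ω | K0 ≤ V ω}).toReal ≤ (n : ℝ) * (Mr * Δw n) :=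
      le_trans hmark hEV
    have h2 : (n : ℝ) * (Mr * Δw n) = K0 * ε := by
      rw [hK0def]; field_simp
    rw [h2] at h1
    exact le_of_mul_le_mul_left h1 hK0pos
  have hmeasle : (μ n) {ω | K0 ≤ V ω} ≤ ENNReal.ofReal ε :=
    (ENNReal.le_ofReal_iff_toReal_le (measure_ne_top _ _) hε0.le).mpr htoReal
  -- pointwise implication
  have hpoint : ∀ ω, V ω ≤ K0 →
      (1 / (n : ℝ)) * ∑ i, |(((Δw n)⁻¹ • Aw n ω) *ᵥ (fun _ => 1)) i -
        (((Δw n)⁻¹ • EAw n) *ᵥ (fun _ => 1)) i| ≤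
        Real.sqrt (Mr / (ε * (c * (n : ℝ) ^ δ))) := by
    intro ω hV
    have hid : ∀ i, (((Δw n)⁻¹ • Aw n ω) *ᵥ (fun _ => 1)) i -
        (((Δw n)⁻¹ • EAw n) *ᵥ (fun _ => 1)) i = (Δw n)⁻¹ * W i ω := by
      intro i
      have hA' : (((Δw n)⁻¹ • Aw n ω) *ᵥ (fun _ => 1)) i
          = (Δw n)⁻¹ * ∑ k, x n k ω * r k i := by
        simp only [Matrix.mulVec, dotProduct, Matrix.smul_apply, smul_eq_mul, mul_one]
        rw [← Finset.mul_sum]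
        congr 1
        calc ∑ j, Aw n ω i j = ∑ j, ∑ k, x n k ω * completeSub n k i j := by
              simp only [hAwent]
          _ = ∑ k, ∑ j, x n k ω * completeSub n k i j := Finset.sum_comm
          _ = ∑ k, x n k ω * r k i := Finset.sum_congr rfl fun k _ => by
              simp only [hrdef]
              rw [Finset.mul_sum]
      have hE' : (((Δw n)⁻¹ • EAw n) *ᵥ (fun _ => 1)) i
          = (Δw n)⁻¹ * ∑ k, p n k * r k i := by
        simp only [Matrix.mulVec, dotProduct, Matrix.smul_apply, smul_eq_mul, mul_one]
        rw [← Finset.mul_sum, hED i]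
      rw [hA', hE', ← mul_sub]
      congr 1
      simp only [hWdef]
      rw [← Finset.sum_sub_distrib]
      exact Finset.sum_congr rfl fun k _ => by ring
    set SS : ℝ := ∑ i, |W i ω| with hSSdef
    have hSSnn : 0 ≤ SS := Finset.sum_nonneg fun i _ => abs_nonneg _
    have hSS2 : SS ^ 2 ≤ (n : ℝ) * V ω := by
      have hcs2 := sq_sum_le_card_mul_sum_sq
        (s := (Finset.univ : Finset (Fin n))) (f := fun i : Fin n => |W i ω|)
      simp only [sq_abs, Finset.card_univ, Fintype.card_fin] at hcs2
      simpa [hSSdef, hVdef] using hcs2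
    have hLHS : (1 / (n : ℝ)) * ∑ i, |(((Δw n)⁻¹ • Aw n ω) *ᵥ (fun _ => 1)) i -
        (((Δw n)⁻¹ • EAw n) *ᵥ (fun _ => 1)) i| = SS / ((n : ℝ) * Δw n) := by
      simp only [hid]
      have habs : ∀ i, |(Δw n)⁻¹ * W i ω| = (Δw n)⁻¹ * |W i ω| := fun i => by
        rw [abs_mul, abs_of_nonneg (inv_nonneg.mpr hΔpos.le)]
      simp only [habs]
      rw [← Finset.mul_sum, ← hSSdef]
      rw [eq_div_iff (ne_of_gt (mul_pos hnR hΔpos))]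
      field_simp
    rw [hLHS]
    refine (Real.le_sqrt (div_nonneg hSSnn (mul_pos hnR hΔpos).le)
      (div_nonneg hMrpos.le
        (mul_nonneg hε0.le (mul_nonneg hcpos.le (Real.rpow_pos_of_pos hnR δ).le)))).mpr ?_
    have hchain : (SS / ((n : ℝ) * Δw n)) ^ 2 ≤ Mr / (ε * Δw n) := by
      have h1 : SS ^ 2 ≤ (n : ℝ) * K0 :=
        le_trans hSS2 (mul_le_mul_of_nonneg_left hV hnR.le)
      rw [div_pow, div_le_div_iff₀ (pow_pos (mul_pos hnR hΔpos) 2) (mul_pos hε0 hΔpos)]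
      have h2 : (n : ℝ) * K0 * (ε * Δw n) = Mr * ((n : ℝ) * Δw n) ^ 2 := by
        rw [hK0def]; field_simp
      nlinarith [mul_le_mul_of_nonneg_right h1 (mul_pos hε0 hΔpos).le]
    refine le_trans hchain ?_
    apply div_le_div_of_nonneg_left hMrpos.le
      (mul_pos hε0 (mul_pos hcpos (Real.rpow_pos_of_pos hnR δ)))
    exact mul_le_mul_of_nonneg_left hΔlb hε0.le
  -- putting everything together
  set Bad : Set (Ω n) := {ω | K0 ≤ V ω} with hBaddef
  have hsub : Badᶜ ⊆ {ω | (1 / (n : ℝ)) *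
      ∑ i, |(((Δw n)⁻¹ • Aw n ω) *ᵥ (fun _ => 1)) i -
            (((Δw n)⁻¹ • EAw n) *ᵥ (fun _ => 1)) i| ≤
        Real.sqrt (Mr / (ε * (c * (n : ℝ) ^ δ)))} := by
    intro ω hω
    exact hpoint ω (le_of_not_ge hω)
  calc ENNReal.ofReal (1 - ε) = ENNReal.ofReal 1 - ENNReal.ofReal ε :=
        ENNReal.ofReal_sub 1 hε0.le
    _ = 1 - ENNReal.ofReal ε := by rw [ENNReal.ofReal_one]
    _ ≤ 1 - (μ n) Bad := tsub_le_tsub_left hmeasle 1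
    _ ≤ (μ n) Badᶜ := by
        rw [tsub_le_iff_right]
        calc (1 : ENNReal) = (μ n) Set.univ := measure_univ.symm
          _ = (μ n) (Badᶜ ∪ Bad) := by rw [Set.compl_union_self]
          _ ≤ (μ n) Badᶜ + (μ n) Bad := measure_union_le _ _
    _ ≤ _ := measure_mono hsub
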